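/- Let 0<q<1, 0<α<2, β>0, and set α' := 2^α/((1−q^β)(1−q^{1/2})). Then for every integer k≥1 one has 1/Γ_q(αk+β) + 1/Γ_q(α(k−1)+β) ≤ (2^{1−α}/Γ_q(β)) · (1−q^{1/2})^{α(k−1)} · (α')^k / [k]_{q^{1/2}}!, where for 0<p<1 the p-factorial is [k]_p! := ∏_{j=1}^{k} (1−p^j)/(1−p). -/

import Mathlib

open scoped BigOperators
open Real Finset

/-- The infinite q-Pochhammer symbol `(a;q)_∞ = ∏_{j=0}^∞ (1 - q^j a)`. -/
noncomputable def qPochInf (q a : ℝ) : ℝ := ∏' j : ℕ, (1 - q ^ j * a)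

/-- The q-gamma function `Γ_q(x) = ((q;q)_∞/(q^x;q)_∞)·(1-q)^{1-x}`. -/
noncomputable def qGamma (q x : ℝ) : ℝ :=
  (qPochInf q q / qPochInf q (q ^ x)) * (1 - q) ^ (1 - x)

/-- The p-factorial `[k]_p! = ∏_{j=1}^{k} (1−p^j)/(1−p), with `[0]_p! = 1`. -/
noncomputable def qFactorial (p : ℝ) (k : ℕ) : ℝ :=
  ∏ j ∈ Finset.range k, (1 - p ^ (j + 1)) / (1 - p)

section Helpers

variable {q a b : ℝ}

lemma factor_pos (hq0 : 0 < q) (hq1 : q < 1) (ha0 : 0 ≤ a) (ha1 : a < 1) (j : ℕ) :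
    0 < 1 - q ^ j * a := by
  have h1 : q ^ j ≤ 1 := pow_le_one₀ hq0.le hq1.le
  nlinarith [pow_pos hq0 j]

lemma summable_log_factor (hq0 : 0 < q) (hq1 : q < 1) (ha0 : 0 ≤ a) (ha1 : a < 1) :
    Summable fun j : ℕ => Real.log (1 - q ^ j * a) := by
  rw [← summable_neg_iff]
  have hpos := factor_pos hq0 hq1 ha0 ha1
  refine Summable.of_nonneg_of_le (f := fun j : ℕ => (1 - a)⁻¹ * a * q ^ j) ?_ ?_
    ((summable_geometric_of_lt_one hq0.le hq1).mul_left _)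
  · intro j
    have hx : q ^ j * a ≤ 1 := by nlinarith [(hpos j)]
    have := Real.log_nonpos (x := 1 - q ^ j * a) (by nlinarith [(hpos j)]) (by nlinarith [pow_pos hq0 j])
    linarith
  · intro j
    have hj := hpos j
    have hqj : q ^ j ≤ 1 := pow_le_one₀ hq0.le hq1.le
    have hqj0 : 0 < q ^ j := pow_pos hq0 j
    have hxa : q ^ j * a ≤ a := by nlinarith
    have h1 : -Real.log (1 - q ^ j * a) ≤ (1 - q ^ j * a)⁻¹ - 1 := by
      have := Real.log_le_sub_one_of_pos (x := (1 - q ^ j * a)⁻¹) (by positivity)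
      rwa [Real.log_inv] at this
    have h2 : (1 - q ^ j * a)⁻¹ - 1 = (q ^ j * a) / (1 - q ^ j * a) := by
      field_simp
      ring
    have h3 : (q ^ j * a) / (1 - q ^ j * a) ≤ (q ^ j * a) / (1 - a) := by
      apply div_le_div_of_nonneg_left (by positivity) (by linarith) (by linarith)
    have h4 : (q ^ j * a) / (1 - a) = (1 - a)⁻¹ * a * q ^ j := by ring
    linarith [h1, h3, h2 ▸ h3]

lemma multipliable_factor (hq0 : 0 < q) (hq1 : q < 1) (ha0 : 0 ≤ a) (ha1 : a < 1) :
    Multipliable fun j : ℕ => 1 - q ^ j * a :=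
  Real.multipliable_of_summable_log (f := fun (j : ℕ) => 1 - q ^ j * a)
    (fun j => factor_pos hq0 hq1 ha0 ha1 j)
    (summable_log_factor hq0 hq1 ha0 ha1)

lemma qPochInf_eq_exp (hq0 : 0 < q) (hq1 : q < 1) (ha0 : 0 ≤ a) (ha1 : a < 1) :
    qPochInf q a = Real.exp (∑' j : ℕ, Real.log (1 - q ^ j * a)) := by
  have := Real.rexp_tsum_eq_tprod (f := fun (j : ℕ) => 1 - q ^ j * a)
    (fun j => factor_pos hq0 hq1 ha0 ha1 j)
    (summable_log_factor hq0 hq1 ha0 ha1)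
  rw [qPochInf]
  exact this.symm

lemma qPochInf_pos (hq0 : 0 < q) (hq1 : q < 1) (ha0 : 0 ≤ a) (ha1 : a < 1) :
    0 < qPochInf q a := by
  rw [qPochInf_eq_exp hq0 hq1 ha0 ha1]
  exact Real.exp_pos _

lemma qPochInf_le_one (hq0 : 0 < q) (hq1 : q < 1) (ha0 : 0 ≤ a) (ha1 : a < 1) :
    qPochInf q a ≤ 1 := by
  rw [qPochInf_eq_exp hq0 hq1 ha0 ha1, Real.exp_le_one_iff]
  apply tsum_nonpos
  intro j
  apply Real.log_nonpos (factor_pos hq0 hq1 ha0 ha1 j).le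
  have : 0 ≤ q ^ j * a := by positivity
  linarith

lemma qPochInf_anti (hq0 : 0 < q) (hq1 : q < 1) (ha0 : 0 ≤ a) (hab : a ≤ b) (hb1 : b < 1) :
    qPochInf q b ≤ qPochInf q a := by
  have ha1 : a < 1 := lt_of_le_of_lt hab hb1
  have hb0 : 0 ≤ b := le_trans ha0 hab
  rw [qPochInf_eq_exp hq0 hq1 hb0 hb1, qPochInf_eq_exp hq0 hq1 ha0 ha1, Real.exp_le_exp]
  apply Summable.tsum_le_tsum _ (summable_log_factor hq0 hq1 hb0 hb1) (summable_log_factor hq0 hq1 ha0 ha1)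
  intro j
  apply Real.log_le_log (factor_pos hq0 hq1 hb0 hb1 j)
  have : 0 ≤ q ^ j := (pow_pos hq0 j).le
  nlinarith

lemma qPochInf_split (hq0 : 0 < q) (hq1 : q < 1) (ha0 : 0 ≤ a) (ha1 : a < 1) (n : ℕ) :
    qPochInf q a = (∏ j ∈ Finset.range n, (1 - q ^ j * a)) * qPochInf q (q ^ n * a) := by
  have hqn : 0 < q ^ n := pow_pos hq0 n
  have hqn1 : q ^ n ≤ 1 := pow_le_one₀ hq0.le hq1.le
  have ha' : 0 ≤ q ^ n * a := by positivity
  have ha'1 : q ^ n * a < 1 := lt_of_le_of_lt (by nlinarith) ha1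
  have hmult : Multipliable fun i : ℕ => 1 - q ^ (i + n) * a := by
    have := multipliable_factor hq0 hq1 ha' ha'1
    apply this.congr
    intro i
    show 1 - q ^ i * (q ^ n * a) = 1 - q ^ (i + n) * a
    rw [pow_add]; ring
  have key := Multipliable.prod_mul_tprod_nat_mul' (f := fun j : ℕ => 1 - q ^ j * a) (k := n) hmult
  rw [qPochInf, ← key]
  congr 1
  rw [qPochInf]
  apply tprod_congr
  intro i
  show 1 - q ^ (i + n) * a = 1 - q ^ i * (q ^ n * a)
  rw [pow_add]; ring

end Helpers

section Main

variable {q α β : ℝ}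

lemma one_div_qGamma (hq0 : 0 < q) (hq1 : q < 1) {x : ℝ} (hx : 0 < x) :
    1 / qGamma q x = qPochInf q (q ^ x) * (1 - q) ^ (x - 1) / qPochInf q q := by
  have h1q : 0 < 1 - q := by linarith
  have hP : 0 < qPochInf q (q ^ x) :=
    qPochInf_pos hq0 hq1 (Real.rpow_pos_of_pos hq0 x).le (Real.rpow_lt_one hq0.le hq1 hx)
  have hC : 0 < qPochInf q q := qPochInf_pos hq0 hq1 hq0.le hq1
  have hr : (0:ℝ) < (1 - q) ^ ((1:ℝ) - x) := Real.rpow_pos_of_pos h1q _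
  have hrr : (1 - q) ^ (x - 1) = ((1 - q) ^ ((1:ℝ) - x))⁻¹ := by
    rw [← Real.rpow_neg h1q.le]; ring_nf
  rw [qGamma, hrr]
  rw [one_div, mul_inv, inv_div]
  ring

set_option maxHeartbeats 1000000 in
/-- per-term bound -/
lemma term_bound (hq0 : 0 < q) (hq1 : q < 1) (hα0 : 0 < α) (hα2 : α < 2) (hβ : 0 < β)
    (n m : ℕ) (hnm : n ≤ m) (hmn : m ≤ n + 1) :
    qPochInf q (q ^ (α * m + β)) * (1 - q) ^ (α * m)
      ≤ (2 * (1 - q ^ ((1:ℝ)/2))) ^ (α * n) * qPochInf q (q ^ β)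
        / ((1 - q ^ β) ^ (n + 1) * ∏ j ∈ Finset.range (n + 1), (1 - q ^ (((j:ℝ) + 1)/2))) := by
  have h1q : 0 < 1 - q := by linarith
  have hs0 : 0 < q ^ ((1:ℝ)/2) := Real.rpow_pos_of_pos hq0 _
  have hs1 : q ^ ((1:ℝ)/2) < 1 := Real.rpow_lt_one hq0.le hq1 (by norm_num)
  have hs : 0 < 1 - q ^ ((1:ℝ)/2) := by linarith
  have hqβ0 : 0 < q ^ β := Real.rpow_pos_of_pos hq0 β
  have hqβ1 : q ^ β < 1 := Real.rpow_lt_one hq0.le hq1 hβ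
  have hSpos : 0 < ∏ j ∈ Finset.range (n + 1), (1 - q ^ (((j:ℝ) + 1)/2)) := by
    apply Finset.prod_pos
    intro j _
    have : q ^ (((j:ℝ) + 1)/2) < 1 := Real.rpow_lt_one hq0.le hq1 (by positivity)
    linarith
  have hDpos : 0 < ∏ j ∈ Finset.range ((n+1)+(n+1)), (1 - q ^ j * q ^ β) :=
    Finset.prod_pos fun j _ => factor_pos hq0 hq1 hqβ0.le hqβ1 j
  have hDbpos : 0 < (1 - q ^ β) ^ (n + 1)
      * ∏ j ∈ Finset.range (n + 1), (1 - q ^ (((j:ℝ) + 1)/2)) :=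
    mul_pos (pow_pos (by linarith) _) hSpos
  have hxmβ : (0:ℝ) < α * m + β := by
    have h0 : (0:ℝ) ≤ α * m := mul_nonneg hα0.le (Nat.cast_nonneg m)
    linarith
  have hNcast : ((((n+1)+(n+1) : ℕ)):ℝ) = 2 * ((n:ℝ) + 1) := by push_cast; ring
  -- splitting
  have hsplit := qPochInf_split hq0 hq1 hqβ0.le hqβ1 ((n+1)+(n+1))
  have hcast : q ^ ((n+1)+(n+1)) * q ^ β = q ^ (β + ((((n+1)+(n+1) : ℕ)):ℝ)) := by
    rw [Real.rpow_add hq0, Real.rpow_natCast]; ring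
  rw [hcast] at hsplit
  have hNpos : (0:ℝ) < β + ((((n+1)+(n+1) : ℕ)):ℝ) := by
    have := Nat.cast_nonneg (α := ℝ) ((n+1)+(n+1)); linarith
  -- monotonicity step
  have hQm : qPochInf q (q ^ (α * m + β))
      ≤ qPochInf q (q ^ (β + ((((n+1)+(n+1) : ℕ)):ℝ))) := by
    apply qPochInf_anti hq0 hq1 (Real.rpow_pos_of_pos hq0 _).le
    · apply Real.rpow_le_rpow_of_exponent_ge hq0 hq1.le
      have hmr : (m:ℝ) ≤ (n:ℝ) + 1 := by exact_mod_cast hmn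
      have hm0 : (0:ℝ) ≤ (m:ℝ) := Nat.cast_nonneg m
      have : α * m ≤ 2 * ((n:ℝ) + 1) := by
        have h1 : α * m ≤ 2 * (m:ℝ) := mul_le_mul_of_nonneg_right hα2.le hm0
        linarith
      rw [hNcast]
      linarith
    · exact Real.rpow_lt_one hq0.le hq1 hxmβ
  -- D ≥ (1-q^β)^(n+1) * S
  have hDge : (1 - q ^ β) ^ (n + 1) * (∏ j ∈ Finset.range (n + 1), (1 - q ^ (((j:ℝ) + 1)/2)))
      ≤ ∏ j ∈ Finset.range ((n+1)+(n+1)), (1 - q ^ j * q ^ β) := by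
    rw [Finset.prod_range_add (fun j => (1:ℝ) - q ^ j * q ^ β) (n+1) (n+1)]
    apply mul_le_mul
    · calc (1 - q ^ β) ^ (n + 1) = ∏ _j ∈ Finset.range (n+1), (1 - q ^ β) := by
            rw [Finset.prod_const, Finset.card_range]
        _ ≤ ∏ j ∈ Finset.range (n+1), (1 - q ^ j * q ^ β) := by
            apply Finset.prod_le_prod
            · intro j _; linarith
            · intro j _
              have h1 : q ^ j ≤ 1 := pow_le_one₀ hq0.le hq1.le
              nlinarith
    · apply Finset.prod_le_prod
      · intro j _
        have : q ^ (((j:ℝ) + 1)/2) < 1 := Real.rpow_lt_one hq0.le hq1 (by positivity)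
        linarith
      · intro j _
        have hc : q ^ ((n+1) + j) * q ^ β = q ^ ((((n+1)+j : ℕ):ℝ) + β) := by
          rw [Real.rpow_add hq0, Real.rpow_natCast]
        rw [hc]
        have : q ^ ((((n+1)+j : ℕ):ℝ) + β) ≤ q ^ (((j:ℝ) + 1)/2) := by
          apply Real.rpow_le_rpow_of_exponent_ge hq0 hq1.le
          push_cast
          have h1 : (0:ℝ) ≤ (n:ℝ) := Nat.cast_nonneg n
          have h2 : (0:ℝ) ≤ (j:ℝ) := Nat.cast_nonneg j
          linarith
        linarith
    · exact hSpos.le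
    · exact (Finset.prod_pos fun j _ => factor_pos hq0 hq1 hqβ0.le hqβ1 j).le
  -- rpow base/exponent steps
  have hqq : q ^ ((1:ℝ)/2) * q ^ ((1:ℝ)/2) = q := by
    rw [← Real.rpow_add hq0]; norm_num
  have hbb : 1 - q ≤ 2 * (1 - q ^ ((1:ℝ)/2)) := by nlinarith [sq_nonneg (1 - q ^ ((1:ℝ)/2))]
  have hC : (1 - q) ^ (α * m) ≤ (2 * (1 - q ^ ((1:ℝ)/2))) ^ (α * n) := by
    have h1 : (1 - q) ^ (α * m) ≤ (1 - q) ^ (α * (n:ℝ)) := by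
      have hnmr : (n:ℝ) ≤ (m:ℝ) := by exact_mod_cast hnm
      exact Real.rpow_le_rpow_of_exponent_ge h1q (by linarith)
        (mul_le_mul_of_nonneg_left hnmr hα0.le)
    have h2 : (1 - q) ^ (α * (n:ℝ)) ≤ (2 * (1 - q ^ ((1:ℝ)/2))) ^ (α * (n:ℝ)) :=
      Real.rpow_le_rpow h1q.le hbb (by positivity)
    linarith
  -- combine
  have hQβval : qPochInf q (q ^ (β + ((((n+1)+(n+1) : ℕ)):ℝ)))
      = qPochInf q (q ^ β) / ∏ j ∈ Finset.range ((n+1)+(n+1)), (1 - q ^ j * q ^ β) := by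
    rw [hsplit]
    exact (mul_div_cancel_left₀ _ hDpos.ne').symm
  have hQpos : 0 ≤ qPochInf q (q ^ (α * m + β)) :=
    (qPochInf_pos hq0 hq1 (Real.rpow_pos_of_pos hq0 _).le
      (Real.rpow_lt_one hq0.le hq1 hxmβ)).le
  have hQβpos : 0 < qPochInf q (q ^ β) := qPochInf_pos hq0 hq1 hqβ0.le hqβ1
  calc qPochInf q (q ^ (α * m + β)) * (1 - q) ^ (α * m)
      ≤ qPochInf q (q ^ (β + ((((n+1)+(n+1) : ℕ)):ℝ)))
          * (2 * (1 - q ^ ((1:ℝ)/2))) ^ (α * n) := by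
        apply mul_le_mul hQm hC (Real.rpow_nonneg h1q.le _)
        exact (qPochInf_pos hq0 hq1 (Real.rpow_pos_of_pos hq0 _).le
          (Real.rpow_lt_one hq0.le hq1 hNpos)).le
    _ = (2 * (1 - q ^ ((1:ℝ)/2))) ^ (α * n) * qPochInf q (q ^ β)
          / ∏ j ∈ Finset.range ((n+1)+(n+1)), (1 - q ^ j * q ^ β) := by
        rw [hQβval]; ring
    _ ≤ (2 * (1 - q ^ ((1:ℝ)/2))) ^ (α * n) * qPochInf q (q ^ β)
          / ((1 - q ^ β) ^ (n + 1) * ∏ j ∈ Finset.range (n + 1), (1 - q ^ (((j:ℝ) + 1)/2))) := by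
        apply div_le_div_of_nonneg_left _ hDbpos hDge
        positivity

end Main

theorem qGamma_sum_bound (q α β : ℝ) (hq0 : 0 < q) (hq1 : q < 1)
    (hα0 : 0 < α) (hα2 : α < 2) (hβ : 0 < β) :
    ∀ k : ℕ, 1 ≤ k →
      1 / qGamma q (α * k + β) + 1 / qGamma q (α * ((k : ℝ) - 1) + β)
        ≤ (2 ^ ((1 : ℝ) - α) / qGamma q β)
            * (1 - q ^ ((1 : ℝ) / 2)) ^ (α * ((k : ℝ) - 1))
            * (2 ^ α / ((1 - q ^ β) * (1 - q ^ ((1 : ℝ) / 2)))) ^ k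
            / qFactorial (q ^ ((1 : ℝ) / 2)) k := by
  intro k hk
  obtain ⟨n, rfl⟩ : ∃ n, k = n + 1 := ⟨k - 1, (Nat.succ_pred_eq_of_pos hk).symm⟩
  have h1q : 0 < 1 - q := by linarith
  have hCpos : 0 < qPochInf q q := qPochInf_pos hq0 hq1 hq0.le hq1
  have hs0 : 0 < q ^ ((1:ℝ)/2) := Real.rpow_pos_of_pos hq0 _
  have hs1 : q ^ ((1:ℝ)/2) < 1 := Real.rpow_lt_one hq0.le hq1 (by norm_num)
  have hs : 0 < 1 - q ^ ((1:ℝ)/2) := by linarith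
  have hqβ0 : 0 < q ^ β := Real.rpow_pos_of_pos hq0 β
  have hqβ1 : q ^ β < 1 := Real.rpow_lt_one hq0.le hq1 hβ
  set S := ∏ j ∈ Finset.range (n + 1), (1 - q ^ (((j:ℝ) + 1)/2)) with hS
  have hSpos : 0 < S := by
    apply Finset.prod_pos
    intro j _
    have : q ^ (((j:ℝ) + 1)/2) < 1 := Real.rpow_lt_one hq0.le hq1 (by positivity)
    linarith
  -- cast cleanup
  have e1 : α * (((n+1 : ℕ)):ℝ) + β = α * ((n:ℝ) + 1) + β := by push_cast; ring
  have e2 : α * ((((n+1 : ℕ)):ℝ) - 1) + β = α * (n:ℝ) + β := by push_cast; ring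
  have e3 : α * ((((n+1 : ℕ)):ℝ) - 1) = α * (n:ℝ) := by push_cast; ring
  rw [e1, e2, e3]
  -- expand the two 1/Γ terms
  have hx1 : (0:ℝ) < α * ((n:ℝ) + 1) + β := by
    have h0 : (0:ℝ) ≤ α * ((n:ℝ) + 1) :=
      mul_nonneg hα0.le (by have := Nat.cast_nonneg (α := ℝ) n; linarith)
    linarith
  have hx2 : (0:ℝ) < α * (n:ℝ) + β := by
    have h0 : (0:ℝ) ≤ α * (n:ℝ) := mul_nonneg hα0.le (Nat.cast_nonneg n)
    linarith
  rw [one_div_qGamma hq0 hq1 hx1, one_div_qGamma hq0 hq1 hx2]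
  -- split rpow exponents
  have hr1 : (1 - q) ^ (α * ((n:ℝ) + 1) + β - 1)
      = (1 - q) ^ (α * ((n:ℝ) + 1)) * (1 - q) ^ (β - 1) := by
    rw [← Real.rpow_add h1q]; ring_nf
  have hr2 : (1 - q) ^ (α * (n:ℝ) + β - 1)
      = (1 - q) ^ (α * (n:ℝ)) * (1 - q) ^ (β - 1) := by
    rw [← Real.rpow_add h1q]; ring_nf
  rw [hr1, hr2]
  -- term bounds
  have hT1 := term_bound hq0 hq1 hα0 hα2 hβ n (n+1) (Nat.le_succ n) le_rfl
  have hT2 := term_bound hq0 hq1 hα0 hα2 hβ n n le_rfl (Nat.le_succ n)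
  push_cast at hT1 hT2
  rw [← hS] at hT1 hT2
  -- RHS equality
  have hΓβ : 2 ^ ((1:ℝ) - α) / qGamma q β
      = 2 ^ ((1:ℝ) - α) * (qPochInf q (q ^ β) * (1 - q) ^ (β - 1) / qPochInf q q) := by
    rw [div_eq_mul_one_div, one_div_qGamma hq0 hq1 hβ]
  have hA : ((2:ℝ) ^ α / ((1 - q ^ β) * (1 - q ^ ((1:ℝ)/2)))) ^ (n+1)
      = 2 ^ (α * ((n:ℝ)+1)) / ((1 - q ^ β) ^ (n+1) * (1 - q ^ ((1:ℝ)/2)) ^ (n+1)) := by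
    rw [div_pow, mul_pow]
    congr 1
    rw [← Real.rpow_natCast ((2:ℝ) ^ α) (n+1), ← Real.rpow_mul (by norm_num : (0:ℝ) ≤ 2)]
    push_cast; ring_nf
  have hF : qFactorial (q ^ ((1:ℝ)/2)) (n+1) = S / (1 - q ^ ((1:ℝ)/2)) ^ (n+1) := by
    rw [qFactorial, Finset.prod_div_distrib, Finset.prod_const, Finset.card_range, hS]
    congr 1
    apply Finset.prod_congr rfl
    intro j _
    congr 1
    rw [← Real.rpow_natCast (q ^ ((1:ℝ)/2)) (j+1), ← Real.rpow_mul hq0.le]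
    congr 1
    push_cast; ring
  have h2pow : (2:ℝ) ^ ((1:ℝ) - α) * 2 ^ (α * ((n:ℝ)+1)) = 2 * 2 ^ (α * (n:ℝ)) := by
    rw [← Real.rpow_add (by norm_num : (0:ℝ) < 2),
      show (1:ℝ) - α + α * ((n:ℝ)+1) = 1 + α * (n:ℝ) by ring,
      Real.rpow_add (by norm_num : (0:ℝ) < 2), Real.rpow_one]
  have h3pow : (2:ℝ) ^ (α * (n:ℝ)) * (1 - q ^ ((1:ℝ)/2)) ^ (α * (n:ℝ))
      = (2 * (1 - q ^ ((1:ℝ)/2))) ^ (α * (n:ℝ)) :=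
    (Real.mul_rpow (by norm_num) hs.le).symm
  have hRHS : 2 ^ ((1:ℝ) - α) / qGamma q β * (1 - q ^ ((1:ℝ)/2)) ^ (α * (n:ℝ))
        * ((2:ℝ) ^ α / ((1 - q ^ β) * (1 - q ^ ((1:ℝ)/2)))) ^ (n+1)
        / qFactorial (q ^ ((1:ℝ)/2)) (n+1)
      = (2 * ((2 * (1 - q ^ ((1:ℝ)/2))) ^ (α * (n:ℝ)) * qPochInf q (q ^ β)
          / ((1 - q ^ β) ^ (n+1) * S))) * ((1 - q) ^ (β - 1) / qPochInf q q) := by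
    have h2pow' : (2:ℝ) ^ ((1:ℝ) - α) = 2 * 2 ^ (α * (n:ℝ)) / 2 ^ (α * ((n:ℝ)+1)) := by
      rw [eq_div_iff (ne_of_gt (Real.rpow_pos_of_pos (by norm_num : (0:ℝ) < 2) _))]
      exact h2pow
    rw [hΓβ, hA, hF, ← h3pow, h2pow']
    have hsp : (0:ℝ) < (1 - q ^ ((1:ℝ)/2)) ^ (n+1) := pow_pos hs _
    have hqβp : (0:ℝ) < (1 - q ^ β) ^ (n+1) := pow_pos (by linarith) _
    have hv : (0:ℝ) < 2 ^ (α * ((n:ℝ)+1)) := Real.rpow_pos_of_pos (by norm_num) _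
    field_simp
  rw [hRHS]
  have key : qPochInf q (q ^ (α * ((n:ℝ)+1) + β)) * (1 - q) ^ (α * ((n:ℝ)+1))
      + qPochInf q (q ^ (α * (n:ℝ) + β)) * (1 - q) ^ (α * (n:ℝ))
      ≤ 2 * ((2 * (1 - q ^ ((1:ℝ)/2))) ^ (α * (n:ℝ)) * qPochInf q (q ^ β)
          / ((1 - q ^ β) ^ (n+1) * S)) := by
    have := add_le_add hT1 hT2
    calc qPochInf q (q ^ (α * ((n:ℝ)+1) + β)) * (1 - q) ^ (α * ((n:ℝ)+1))
        + qPochInf q (q ^ (α * (n:ℝ) + β)) * (1 - q) ^ (α * (n:ℝ))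
        ≤ (2 * (1 - q ^ ((1:ℝ)/2))) ^ (α * (n:ℝ)) * qPochInf q (q ^ β)
            / ((1 - q ^ β) ^ (n+1) * S)
          + (2 * (1 - q ^ ((1:ℝ)/2))) ^ (α * (n:ℝ)) * qPochInf q (q ^ β)
            / ((1 - q ^ β) ^ (n+1) * S) := add_le_add hT1 hT2
      _ = 2 * ((2 * (1 - q ^ ((1:ℝ)/2))) ^ (α * (n:ℝ)) * qPochInf q (q ^ β)
            / ((1 - q ^ β) ^ (n+1) * S)) := by ring
  calc qPochInf q (q ^ (α * ((n:ℝ)+1) + β)) * ((1 - q) ^ (α * ((n:ℝ)+1)) * (1 - q) ^ (β-1))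
          / qPochInf q q
      + qPochInf q (q ^ (α * (n:ℝ) + β)) * ((1 - q) ^ (α * (n:ℝ)) * (1 - q) ^ (β-1))
          / qPochInf q q
      = (qPochInf q (q ^ (α * ((n:ℝ)+1) + β)) * (1 - q) ^ (α * ((n:ℝ)+1))
          + qPochInf q (q ^ (α * (n:ℝ) + β)) * (1 - q) ^ (α * (n:ℝ)))
        * ((1 - q) ^ (β - 1) / qPochInf q q) := by ring
    _ ≤ (2 * ((2 * (1 - q ^ ((1:ℝ)/2))) ^ (α * (n:ℝ)) * qPochInf q (q ^ β)
          / ((1 - q ^ β) ^ (n+1) * S))) * ((1 - q) ^ (β - 1) / qPochInf q q) := by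
        apply mul_le_mul_of_nonneg_right key
        positivity
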